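/- General ideal-filter channel as circular convolution: let N, M, B be positive integers with B dividing N, let α ∈ ℂ, and suppose the per-symbol channel gains are H[n,m] = α·exp(2πi a n)·exp(−2πi c_{⌊nB/N⌋} m), where a ∈ ℝ and c_0,…,c_{B−1} ∈ ℝ are constants (c_b constant over each block of N/B consecutive symbol intervals). For delay-Doppler symbols X with ISFFT X_TF, define Y_TF[n,m] = H[n,m]·X_TF[n,m] and let Y_DD be its SFFT. Then Y_DD[k,l] = α · Σ_{k'=0}^{N-1} Σ_{l'=0}^{M-1} X[k',l']·Φ[k−k', l−l'], where Φ[k,l] = (1/B) Σ_{b=0}^{B-1} exp(−2πi (k/N − a)·bN/B) · D_{N/B}(k/N − a) · D_M(−(l/M − c_b)), with D_Q(ν) = (1/Q) Σ_{q=0}^{Q-1} exp(−2πi ν q). -/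

import Mathlib

open Complex Finset

/-- The periodic sinc (Dirichlet) function of degree `Q`. -/
noncomputable def dirichlet (Q : ℕ) (ν : ℝ) : ℂ :=
  (1 / (Q : ℂ)) * ∑ q ∈ Finset.range Q, Complex.exp (-2 * Real.pi * Complex.I * ν * q)

/-- The delay-Doppler spreading sequence of Proposition 2 (ideal shaping filters,
`B`-fold stop-and-go approximation), for normalized Doppler `a` and per-block
normalized delays `c b`. -/
noncomputable def Phi (N M B : ℕ) (a : ℝ) (c : ℕ → ℝ) (k l : ℤ) : ℂ :=
  (1 / (B : ℂ)) * ∑ b ∈ Finset.range B,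
    Complex.exp (-2 * Real.pi * Complex.I * (((k : ℝ) / N - a : ℝ) : ℂ) *
        (((b * (N / B) : ℕ) : ℂ))) *
      dirichlet (N / B) ((k : ℝ) / N - a) *
      dirichlet M (-((l : ℝ) / M - c b))

lemma sum_range_mul_split {β : Type*} [AddCommMonoid β] (B Q : ℕ) (f : ℕ → β) :
    ∑ n ∈ Finset.range (B * Q), f n =
      ∑ b ∈ Finset.range B, ∑ q ∈ Finset.range Q, f (b * Q + q) := by
  induction B with
  | zero => simp
  | succ B ih =>
      rw [Nat.succ_mul, Finset.sum_range_succ, ← ih, Finset.sum_range_add]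

lemma block_div (B Q b q : ℕ) (hB : 0 < B) (hq : q < Q) :
    (b * Q + q) * B / (B * Q) = b := by
  have hQ : 0 < Q := lt_of_le_of_lt (Nat.zero_le q) hq
  have h1 : (b * Q + q) * B = (B * Q) * b + q * B := by ring
  rw [h1, Nat.mul_add_div (Nat.mul_pos hB hQ),
    Nat.div_eq_of_lt (by calc q * B < Q * B := (Nat.mul_lt_mul_right hB).mpr hq
                           _ = B * Q := Nat.mul_comm _ _)]
  omega

lemma scalar_aux (x y z E S1 S2 : ℂ) (hx : x ≠ 0) (hy : y ≠ 0) (hz : z ≠ 0) :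
    1 / x * (E * (1 / y * S1) * (1 / z * S2)) = 1 / (x * y * z) * (E * S1 * S2) := by
  field_simp

lemma key (B Q M : ℕ) (hB : 0 < B) (hQ : 0 < Q) (hM : 0 < M)
    (a : ℝ) (c : ℕ → ℝ) (K L : ℤ) :
    Phi (B * Q) M B a c K L =
      (1 / (((B * Q : ℕ) : ℂ) * M)) * ∑ n ∈ Finset.range (B * Q), ∑ m ∈ Finset.range M,
        Complex.exp (-2 * Real.pi * Complex.I *
            (((K : ℝ) / ((B * Q : ℕ) : ℝ) - a : ℝ) : ℂ) * n) *
        Complex.exp (2 * Real.pi * Complex.I *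
            (((L : ℝ) / (M : ℝ) - c (n * B / (B * Q)) : ℝ) : ℂ) * m) := by
  have hQB : (B * Q) / B = Q := Nat.mul_div_cancel_left Q hB
  set ν : ℝ := (K : ℝ) / ((B * Q : ℕ) : ℝ) - a with hν
  rw [Phi, hQB, sum_range_mul_split B Q, Finset.mul_sum, Finset.mul_sum]
  refine Finset.sum_congr rfl fun b hb => ?_
  have hT : (∑ q ∈ Finset.range Q, ∑ m ∈ Finset.range M,
      Complex.exp (-2 * Real.pi * Complex.I * (ν : ℂ) * ((b * Q + q : ℕ) : ℂ)) *
        Complex.exp (2 * Real.pi * Complex.I *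
          (((L : ℝ) / (M : ℝ) - c ((b * Q + q) * B / (B * Q)) : ℝ) : ℂ) * m)) =
      Complex.exp (-2 * Real.pi * Complex.I * (ν : ℂ) * ((b * Q : ℕ) : ℂ)) *
        (∑ q ∈ Finset.range Q, Complex.exp (-2 * Real.pi * Complex.I * (ν : ℂ) * q)) *
        (∑ m ∈ Finset.range M,
          Complex.exp (-2 * Real.pi * Complex.I * ((-((L : ℝ) / M - c b) : ℝ) : ℂ) * m)) := by
    calc (∑ q ∈ Finset.range Q, ∑ m ∈ Finset.range M,
        Complex.exp (-2 * Real.pi * Complex.I * (ν : ℂ) * ((b * Q + q : ℕ) : ℂ)) *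
          Complex.exp (2 * Real.pi * Complex.I *
            (((L : ℝ) / (M : ℝ) - c ((b * Q + q) * B / (B * Q)) : ℝ) : ℂ) * m))
        = ∑ q ∈ Finset.range Q, ∑ m ∈ Finset.range M,
            (Complex.exp (-2 * Real.pi * Complex.I * (ν : ℂ) * ((b * Q : ℕ) : ℂ)) *
              Complex.exp (-2 * Real.pi * Complex.I * (ν : ℂ) * q)) *
            Complex.exp (-2 * Real.pi * Complex.I * ((-((L : ℝ) / M - c b) : ℝ) : ℂ) * m) := by
          refine Finset.sum_congr rfl fun q hq => Finset.sum_congr rfl fun m hm => ?_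
          rw [block_div B Q b q hB (Finset.mem_range.mp hq), ← Complex.exp_add,
            ← Complex.exp_add, ← Complex.exp_add]
          congr 1
          push_cast
          ring
      _ = (∑ q ∈ Finset.range Q,
            Complex.exp (-2 * Real.pi * Complex.I * (ν : ℂ) * ((b * Q : ℕ) : ℂ)) *
              Complex.exp (-2 * Real.pi * Complex.I * (ν : ℂ) * q)) *
          (∑ m ∈ Finset.range M,
            Complex.exp (-2 * Real.pi * Complex.I * ((-((L : ℝ) / M - c b) : ℝ) : ℂ) * m)) :=
          (Finset.sum_mul_sum _ _ _ _).symm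
      _ = _ := by rw [← Finset.mul_sum]
  rw [hT]
  unfold dirichlet
  have hBne : (B : ℂ) ≠ 0 := Nat.cast_ne_zero.mpr hB.ne'
  have hQne : (Q : ℂ) ≠ 0 := Nat.cast_ne_zero.mpr hQ.ne'
  have hMne : (M : ℂ) ≠ 0 := Nat.cast_ne_zero.mpr hM.ne'
  rw [show ((B * Q : ℕ) : ℂ) = (B : ℂ) * (Q : ℂ) from by push_cast; ring]
  exact scalar_aux _ _ _ _ _ _ hBne hQne hMne

lemma sum_swap4 {β : Type*} [AddCommMonoid β] (s t u v : Finset ℕ) (f : ℕ → ℕ → ℕ → ℕ → β) :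
    (∑ n ∈ s, ∑ m ∈ t, ∑ p ∈ u, ∑ r ∈ v, f n m p r) =
      ∑ p ∈ u, ∑ r ∈ v, ∑ n ∈ s, ∑ m ∈ t, f n m p r := by
  calc (∑ n ∈ s, ∑ m ∈ t, ∑ p ∈ u, ∑ r ∈ v, f n m p r)
      = ∑ n ∈ s, ∑ p ∈ u, ∑ m ∈ t, ∑ r ∈ v, f n m p r :=
        Finset.sum_congr rfl fun _ _ => Finset.sum_comm
    _ = ∑ p ∈ u, ∑ n ∈ s, ∑ m ∈ t, ∑ r ∈ v, f n m p r := Finset.sum_comm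
    _ = ∑ p ∈ u, ∑ n ∈ s, ∑ r ∈ v, ∑ m ∈ t, f n m p r :=
        Finset.sum_congr rfl fun _ _ => Finset.sum_congr rfl fun _ _ => Finset.sum_comm
    _ = ∑ p ∈ u, ∑ r ∈ v, ∑ n ∈ s, ∑ m ∈ t, f n m p r :=
        Finset.sum_congr rfl fun _ _ => Finset.sum_comm

lemma hexp_lemma (B Q M k l k' l' n m : ℕ) (a : ℝ) (c : ℕ → ℝ) :
    Complex.exp (2 * Real.pi * Complex.I * (a : ℂ) * (n : ℂ)) *
      Complex.exp (-2 * Real.pi * Complex.I * ((c (n * B / (B * Q)) : ℝ) : ℂ) * (m : ℂ)) *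
      Complex.exp (2 * Real.pi * Complex.I *
        ((n : ℂ) * (k' : ℂ) / ((B * Q : ℕ) : ℂ) - (m : ℂ) * (l' : ℂ) / (M : ℂ))) *
      Complex.exp (-2 * Real.pi * Complex.I *
        ((n : ℂ) * (k : ℂ) / ((B * Q : ℕ) : ℂ) - (m : ℂ) * (l : ℂ) / (M : ℂ))) =
    Complex.exp (-2 * Real.pi * Complex.I *
        ((((((k : ℤ) - (k' : ℤ) : ℤ) : ℝ)) / ((B * Q : ℕ) : ℝ) - a : ℝ) : ℂ) * n) *
    Complex.exp (2 * Real.pi * Complex.I *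
        ((((((l : ℤ) - (l' : ℤ) : ℤ) : ℝ)) / (M : ℝ) - c (n * B / (B * Q)) : ℝ) : ℂ) * m) := by
  rw [← Complex.exp_add, ← Complex.exp_add, ← Complex.exp_add, ← Complex.exp_add]
  congr 1
  push_cast
  ring

theorem stmt11 (N M B : ℕ) (hN : 0 < N) (hM : 0 < M) (hB : 0 < B) (hBN : B ∣ N)
    (α : ℂ) (a : ℝ) (c : ℕ → ℝ) (X : ℕ → ℕ → ℂ) (k l : ℕ) (hk : k < N) (hl : l < M) :
    (1 / (Real.sqrt (N * M) : ℂ)) * ∑ n ∈ Finset.range N, ∑ m ∈ Finset.range M,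
        ((α * Complex.exp (2 * Real.pi * Complex.I * (a : ℂ) * (n : ℂ)) *
            Complex.exp (-2 * Real.pi * Complex.I * ((c (n * B / N) : ℝ) : ℂ) * (m : ℂ))) *
          ((1 / (Real.sqrt (N * M) : ℂ)) * ∑ k' ∈ Finset.range N, ∑ l' ∈ Finset.range M,
            X k' l' *
              Complex.exp (2 * Real.pi * Complex.I *
                ((n : ℂ) * (k' : ℂ) / (N : ℂ) - (m : ℂ) * (l' : ℂ) / (M : ℂ))))) *
          Complex.exp (-2 * Real.pi * Complex.I *
            ((n : ℂ) * (k : ℂ) / (N : ℂ) - (m : ℂ) * (l : ℂ) / (M : ℂ))) =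
      α * ∑ k' ∈ Finset.range N, ∑ l' ∈ Finset.range M,
        X k' l' * Phi N M B a c ((k : ℤ) - (k' : ℤ)) ((l : ℤ) - (l' : ℤ)) := by
  obtain ⟨Q, rfl⟩ := hBN
  have hQ : 0 < Q := Nat.pos_of_ne_zero fun h => by subst h; simp at hN
  have hs : (1 / ((Real.sqrt (((B * Q : ℕ) : ℝ) * (M : ℝ)) : ℝ) : ℂ)) *
      (1 / ((Real.sqrt (((B * Q : ℕ) : ℝ) * (M : ℝ)) : ℝ) : ℂ)) =
      1 / (((B * Q : ℕ) : ℂ) * (M : ℂ)) := by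
    rw [div_mul_div_comm, one_mul, ← Complex.ofReal_mul,
      Real.mul_self_sqrt (by positivity)]
    push_cast
    ring
  simp only [key B Q M hB hQ hM a c]
  simp only [Finset.mul_sum, Finset.sum_mul]
  rw [sum_swap4]
  refine Finset.sum_congr rfl fun k' _ => Finset.sum_congr rfl fun l' _ =>
    Finset.sum_congr rfl fun n _ => Finset.sum_congr rfl fun m _ => ?_
  rw [← hexp_lemma B Q M k l k' l' n m a c, ← hs]
  ring
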